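/- arXiv:2507.14490 — 3 statements merged into one kernel-verified Lean document; each statement's English description precedes it below -/
import Mathlib

section
/- Let X and Y be elements of a Banach algebra A with X·Y = q·(Y·X) for a complex number q with |q| < 1, and set u = X·Y. Then for every n ≥ 1, ‖u^n‖^(1/n) ≤ |q|^((n+1)/2) · ‖X‖ · ‖Y‖; in particular ‖u^n‖^(1/n) = O(|q|^(n/2)) as n → ∞. -/
lemma pow_comm_aux {A : Type*} [NormedRing A] [NormedAlgebra ℂ A]
    (q : ℂ) (X Y : A) (h : X * Y = q • (Y * X)) (n : ℕ) :
    X ^ n * Y = q ^ n • (Y * X ^ n) := by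
  induction n with
  | zero => simp
  | succ n ih =>
    calc X ^ (n + 1) * Y = X ^ n * (X * Y) := by rw [pow_succ, mul_assoc]
    _ = X ^ n * (q • (Y * X)) := by rw [h]
    _ = q • ((X ^ n * Y) * X) := by rw [mul_smul_comm, mul_assoc]
    _ = q • ((q ^ n • (Y * X ^ n)) * X) := by rw [ih]
    _ = q ^ (n + 1) • (Y * X ^ (n + 1)) := by
        rw [smul_mul_assoc, smul_smul, pow_succ, mul_comm (q ^ n) q, pow_succ, mul_assoc]

lemma qpow_aux {A : Type*} [NormedRing A] [NormedAlgebra ℂ A]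
    (q : ℂ) (X Y : A) (h : X * Y = q • (Y * X)) (n : ℕ) :
    (X * Y) ^ n = q ^ (n * (n + 1) / 2) • (Y ^ n * X ^ n) := by
  induction n with
  | zero => simp
  | succ n ih =>
    have key : (n + 1) * (n + 2) / 2 = n * (n + 1) / 2 + (n + 1) := by
      have h2 : 2 ∣ n * (n + 1) := (Nat.even_mul_succ_self n).two_dvd
      have h3 : 2 ∣ (n + 1) * (n + 2) := (Nat.even_mul_succ_self (n+1)).two_dvd
      have e : (n + 1) * (n + 2) = n * (n + 1) + 2 * (n + 1) := by ring
      omega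
    calc (X * Y) ^ (n + 1) = (X * Y) ^ n * (X * Y) := pow_succ _ _
    _ = (q ^ (n * (n + 1) / 2) • (Y ^ n * X ^ n)) * (X * Y) := by rw [ih]
    _ = q ^ (n * (n + 1) / 2) • (Y ^ n * (X ^ (n + 1) * Y)) := by
        rw [smul_mul_assoc, mul_assoc, ← mul_assoc (X ^ n), ← pow_succ]
    _ = q ^ (n * (n + 1) / 2) • (Y ^ n * (q ^ (n + 1) • (Y * X ^ (n + 1)))) := by
        rw [pow_comm_aux q X Y h]
    _ = (q ^ (n * (n + 1) / 2) * q ^ (n + 1)) • (Y ^ (n + 1) * X ^ (n + 1)) := by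
        rw [mul_smul_comm, smul_smul, ← mul_assoc, ← pow_succ]
    _ = q ^ ((n + 1) * (n + 2) / 2) • (Y ^ (n + 1) * X ^ (n + 1)) := by
        rw [key]; ring

/-- In a Banach algebra, if `X * Y = q • (Y * X)` with `|q| < 1` and `u = X * Y`, then
for every `n ≥ 1`, `‖u ^ n‖ ^ (1 / n) ≤ |q| ^ ((n + 1) / 2) * ‖X‖ * ‖Y‖`. -/
theorem stmt_3 {A : Type*} [NormedRing A] [NormedAlgebra ℂ A] [CompleteSpace A]
    (q : ℂ) (hq : ‖q‖ < 1) (X Y : A) (h : X * Y = q • (Y * X))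
    (u : A) (hu : u = X * Y) (n : ℕ) (hn : 1 ≤ n) :
    ‖u ^ n‖ ^ ((1 : ℝ) / n) ≤ ‖q‖ ^ (((n : ℝ) + 1) / 2) * ‖X‖ * ‖Y‖ := by
  set R : ℝ := ‖q‖ ^ (((n : ℝ) + 1) / 2) * ‖X‖ * ‖Y‖ with hR
  have hRnn : 0 ≤ R := by positivity
  have hcast : ((n * (n + 1) / 2 : ℕ) : ℝ) = (n : ℝ) * ((n : ℝ) + 1) / 2 := by
    have h2 : 2 ∣ n * (n + 1) := (Nat.even_mul_succ_self n).two_dvd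
    rw [Nat.cast_div h2 (by norm_num)]
    push_cast; ring
  have hbound : ‖u ^ n‖ ≤ R ^ n := by
    rw [hu, qpow_aux q X Y h n, norm_smul]
    have h1 : ‖q ^ (n * (n + 1) / 2)‖ = ‖q‖ ^ (n * (n + 1) / 2) := by
      rw [norm_pow]
    have h2 : ‖Y ^ n * X ^ n‖ ≤ ‖Y‖ ^ n * ‖X‖ ^ n :=
      le_trans (norm_mul_le _ _) (mul_le_mul (norm_pow_le' _ (by omega))
        (norm_pow_le' _ (by omega)) (norm_nonneg _) (by positivity))
    have hRn : R ^ n = ‖q‖ ^ (n * (n + 1) / 2) * (‖Y‖ ^ n * ‖X‖ ^ n) := by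
      rw [hR, mul_pow, mul_pow, ← Real.rpow_natCast (‖q‖ ^ _) n,
        ← Real.rpow_natCast (‖q‖) (n * (n + 1) / 2),
        ← Real.rpow_mul (norm_nonneg q), hcast]
      ring_nf
    rw [h1, hRn]
    exact mul_le_mul_of_nonneg_left h2 (by positivity)
  have hn' : (n : ℝ) ≠ 0 := by positivity
  calc ‖u ^ n‖ ^ ((1 : ℝ) / n) ≤ (R ^ n) ^ ((1 : ℝ) / n) :=
        Real.rpow_le_rpow (norm_nonneg _) hbound (by positivity)
  _ = R := by
      rw [← Real.rpow_natCast R n, ← Real.rpow_mul hRnn, mul_one_div, div_self hn',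
        Real.rpow_one]
end

section
/- Let (h_n) be a sequence of entire functions, ρ > 0, 0 < |q| < 1, and define W_n(z) = h_n(z)·z^n·q^(n(n+1)/2) + Σ_{k=0}^{n} (h_k^(n−k)(0)/(n−k)!)·z^k·q^(k(k+1)/2). Then for every n, ‖h_n‖_ρ · ρ^n · |q|^(n(n+1)/2) ≤ (3/2)·‖W_n‖_ρ + (3/2)² · Σ_{k=0}^{n−1} (5/2)^k · ‖W_{n−1−k}‖_ρ / ρ^(k+1), where ‖·‖_ρ is the sup norm on the closed disc of radius ρ. -/
/-- The sup norm of a function on the closed disc of radius `ρ` centered at `0`. -/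
noncomputable def supNorm (ρ : ℝ) (h : ℂ → ℂ) : ℝ :=
  sSup ((fun z => ‖h z‖) '' Metric.closedBall (0 : ℂ) ρ)

/-- The function `W_n(z) = h_n(z) z^n q^{n(n+1)/2}
  + ∑_{k=0}^n (h_k^{(n-k)}(0)/(n-k)!) z^k q^{k(k+1)/2}`. -/
noncomputable def Wfun (q : ℂ) (h : ℕ → ℂ → ℂ) (n : ℕ) : ℂ → ℂ := fun z =>
  h n z * z ^ n * q ^ (n * (n + 1) / 2) +
    ∑ k ∈ Finset.range (n + 1),
      (iteratedDeriv (n - k) (h k) 0 / (Nat.factorial (n - k))) * z ^ k * q ^ (k * (k + 1) / 2)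

lemma abs_le_supNorm {f : ℂ → ℂ} (hf : Continuous f) {ρ : ℝ} {z : ℂ}
    (hz : z ∈ Metric.closedBall (0:ℂ) ρ) : ‖f z‖ ≤ supNorm ρ f := by
  apply le_csSup
  · exact ((isCompact_closedBall _ _).image (continuous_norm.comp hf)).bddAbove
  · exact ⟨z, hz, rfl⟩

lemma supNorm_le {f : ℂ → ℂ} {ρ M : ℝ} (hρ : 0 ≤ ρ)
    (hM : ∀ z ∈ Metric.closedBall (0:ℂ) ρ, ‖f z‖ ≤ M) : supNorm ρ f ≤ M := by
  apply Real.sSup_le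
  · rintro x ⟨w, hw, rfl⟩; exact hM w hw
  · exact (norm_nonneg _).trans (hM 0 (Metric.mem_closedBall_self hρ))

lemma supNorm_add_const {f : ℂ → ℂ} (hf : Continuous f) {ρ : ℝ} (hρ : 0 ≤ ρ) :
    supNorm ρ f ≤ 3/2 * supNorm ρ (fun z => f z + f 0) := by
  have hg : Continuous fun z => f z + f 0 := by fun_prop
  have h0 : 2 * ‖f 0‖ ≤ supNorm ρ (fun z => f z + f 0) := by
    have h := abs_le_supNorm hg (Metric.mem_closedBall_self hρ)
    calc 2 * ‖f 0‖ = ‖f 0 + f 0‖ := by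
          rw [← two_mul, norm_mul, Complex.norm_two]
      _ ≤ _ := h
  apply supNorm_le hρ
  intro z hz
  have h1 : ‖f z‖ ≤ ‖f z + f 0‖ + ‖f 0‖ := by
    calc ‖f z‖ = ‖(f z + f 0) + -(f 0)‖ := by ring_nf
      _ ≤ ‖f z + f 0‖ + ‖-(f 0)‖ := norm_add_le _ _
      _ = ‖f z + f 0‖ + ‖f 0‖ := by rw [norm_neg]
  have h2 := abs_le_supNorm hg hz
  linarith

lemma exists_boundary_max {f : ℂ → ℂ} (hf : Differentiable ℂ f) {ρ : ℝ} (hρ : 0 < ρ) :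
    ∃ z : ℂ, ‖z‖ = ρ ∧
      ∀ w ∈ Metric.closedBall (0:ℂ) ρ, ‖f w‖ ≤ ‖f z‖ := by
  obtain ⟨z, hz, hmax⟩ := Complex.exists_mem_frontier_isMaxOn_norm
    (Metric.isBounded_ball (x := (0:ℂ)) (r := ρ)) (Metric.nonempty_ball.2 hρ)
    hf.diffContOnCl
  rw [frontier_ball (0:ℂ) hρ.ne'] at hz
  rw [mem_sphere_zero_iff_norm] at hz
  refine ⟨z, hz, fun w hw => ?_⟩
  have := hmax (by rwa [closure_ball (0:ℂ) hρ.ne'])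
  simpa using this

lemma supNorm_mul_pow_le {f : ℂ → ℂ} (hf : Differentiable ℂ f) (c : ℂ) (m : ℕ) {ρ : ℝ}
    (hρ : 0 < ρ) :
    supNorm ρ f * ρ ^ m * ‖c‖ ≤ supNorm ρ (fun z => f z * z ^ m * c) := by
  obtain ⟨z, hzρ, hmax⟩ := exists_boundary_max hf hρ
  have hzmem : z ∈ Metric.closedBall (0:ℂ) ρ := by
    simp [Metric.mem_closedBall, Complex.dist_eq, hzρ]
  have h1 : supNorm ρ f ≤ ‖f z‖ := supNorm_le hρ.le hmax
  have h2 : ‖f z * z ^ m * c‖ ≤ supNorm ρ (fun w => f w * w ^ m * c) :=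
    abs_le_supNorm ((hf.continuous.mul (continuous_pow m)).mul continuous_const) hzmem
  calc supNorm ρ f * ρ ^ m * ‖c‖ ≤ ‖f z‖ * ρ ^ m * ‖c‖ := by
        gcongr
    _ = ‖f z * z ^ m * c‖ := by rw [norm_mul, norm_mul, norm_pow, hzρ]
    _ ≤ _ := h2

lemma cauchy_est {f : ℂ → ℂ} (hf : Differentiable ℂ f) {ρ : ℝ} (hρ : 0 < ρ) (j : ℕ) :
    ‖iteratedDeriv j f 0‖ ≤ j.factorial * supNorm ρ f / ρ ^ j := by
  set R : NNReal := ⟨ρ, hρ.le⟩ with hRdef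
  have hR0 : (0:NNReal) < R := by exact_mod_cast hρ
  have hps := hf.hasFPowerSeriesOnBall 0 hR0
  have hfact := hps.factorial_smul (1:ℂ) j
  have hiter : iteratedDeriv j f 0 = iteratedFDeriv ℂ j f 0 (fun _ => 1) :=
    iteratedDeriv_eq_iteratedFDeriv
  have hRρ : (R : ℝ) = ρ := rfl
  -- bound on the coefficient applied to ones
  have h1 : ‖cauchyPowerSeries f 0 R j (fun _ => (1:ℂ))‖ ≤ ‖cauchyPowerSeries f 0 R j‖ := by
    have := (cauchyPowerSeries f 0 R j).le_opNorm (fun _ => (1:ℂ))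
    simpa using this
  -- integral bound
  have hint : (2 * Real.pi)⁻¹ * ∫ θ : ℝ in (0:ℝ)..2 * Real.pi, ‖f (circleMap 0 R θ)‖
      ≤ supNorm ρ f := by
    have hmono : ∫ θ : ℝ in (0:ℝ)..2 * Real.pi, ‖f (circleMap 0 R θ)‖
        ≤ ∫ _ : ℝ in (0:ℝ)..2 * Real.pi, supNorm ρ f := by
      apply intervalIntegral.integral_mono_on Real.two_pi_pos.le
      · exact ((hf.continuous.comp (continuous_circleMap 0 R)).norm).intervalIntegrable _ _
      · exact intervalIntegrable_const
      · intro θ _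
        apply abs_le_supNorm hf.continuous
        simp [Metric.mem_closedBall, Complex.dist_eq, norm_circleMap_zero, hRρ,
          abs_of_pos hρ]
    rw [intervalIntegral.integral_const, sub_zero, smul_eq_mul] at hmono
    calc (2 * Real.pi)⁻¹ * ∫ θ : ℝ in (0:ℝ)..2 * Real.pi, ‖f (circleMap 0 R θ)‖
        ≤ (2 * Real.pi)⁻¹ * (2 * Real.pi * supNorm ρ f) := by
          gcongr
      _ = supNorm ρ f := by
          field_simp
  -- assemble
  have h2 := norm_cauchyPowerSeries_le f 0 R j
  have h3 : ‖iteratedDeriv j f 0‖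
      = j.factorial * ‖cauchyPowerSeries f 0 R j (fun _ => (1:ℂ))‖ := by
    rw [hiter, ← hfact, nsmul_eq_mul, norm_mul]
    simp [Complex.norm_natCast]
  rw [h3]
  have h4 : ‖cauchyPowerSeries f 0 R j‖ ≤ supNorm ρ f * (ρ⁻¹) ^ j := by
    refine h2.trans ?_
    rw [hRρ, abs_of_pos hρ]
    exact mul_le_mul_of_nonneg_right hint (pow_nonneg (inv_nonneg.2 hρ.le) j)
  have hsup : (0:ℝ) ≤ supNorm ρ f :=
    (norm_nonneg _).trans (abs_le_supNorm hf.continuous (Metric.mem_closedBall_self hρ.le))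
  calc (j.factorial : ℝ) * ‖cauchyPowerSeries f 0 R j (fun _ => (1:ℂ))‖
      ≤ (j.factorial : ℝ) * (supNorm ρ f * (ρ⁻¹) ^ j) := by
        gcongr
        exact h1.trans h4
    _ = j.factorial * supNorm ρ f / ρ ^ j := by
        rw [inv_pow]; ring

lemma gronwall {ρ : ℝ} (hρ : 0 < ρ) (S C : ℕ → ℝ)
    (hrec : ∀ n, S n ≤ 3/2 * C n + 3/2 * ∑ k ∈ Finset.range n, S k / ρ ^ (n - k)) (n : ℕ) :
    S n ≤ 3/2 * C n +
      3/2 * (3/2 * ∑ k ∈ Finset.range n, (5/2)^k * C (n-1-k) / ρ^(k+1)) := by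
  have hρ' : ρ ≠ 0 := hρ.ne'
  set E : ℕ → ℝ := fun m => 3/2 * ∑ k ∈ Finset.range m, (5/2)^k * C (m-1-k) / ρ^(k+1) with hE
  have Erec : ∀ m, E (m+1) = (3/2 * C m + 5/2 * E m) / ρ := by
    intro m
    have key : ∑ k ∈ Finset.range (m+1), (5/2:ℝ)^k * C (m+1-1-k) / ρ^(k+1)
        = C m / ρ + 5/2 * (∑ k ∈ Finset.range m, (5/2:ℝ)^k * C (m-1-k) / ρ^(k+1)) / ρ := by
      rw [Finset.sum_range_succ']
      have h1 : ∀ k ∈ Finset.range m, (5/2:ℝ)^(k+1) * C (m+1-1-(k+1)) / ρ^(k+1+1)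
          = 5/2 * ((5/2:ℝ)^k * C (m-1-k) / ρ^(k+1)) / ρ := by
        intro k _
        have : m+1-1-(k+1) = m-1-k := by omega
        rw [this, pow_succ, pow_succ]
        field_simp
      rw [Finset.sum_congr rfl h1]
      have h2 : ∑ k ∈ Finset.range m, (5/2:ℝ) * ((5/2:ℝ)^k * C (m-1-k) / ρ^(k+1)) / ρ
          = 5/2 * (∑ k ∈ Finset.range m, (5/2:ℝ)^k * C (m-1-k) / ρ^(k+1)) / ρ := by
        rw [Finset.mul_sum, Finset.sum_div]
      rw [h2]
      simp
      ring
    rw [hE]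
    simp only [key]
    field_simp
  have Frec : ∀ m, ∑ k ∈ Finset.range m, (3/2 * C k + 3/2 * E k) / ρ^(m-k) = E m := by
    intro m
    induction m with
    | zero => simp [hE]
    | succ m ih =>
      rw [Finset.sum_range_succ]
      have h1 : ∀ k ∈ Finset.range m, (3/2 * C k + 3/2 * E k) / ρ^(m+1-k)
          = ((3/2 * C k + 3/2 * E k) / ρ^(m-k)) / ρ := by
        intro k hk
        rw [Finset.mem_range] at hk
        rw [show m+1-k = (m-k)+1 by omega, pow_succ, div_div]
      rw [Finset.sum_congr rfl h1, ← Finset.sum_div, ih, Erec]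
      simp only [Nat.add_sub_cancel_left, Nat.sub_self, pow_one]
      field_simp
      ring
  induction n using Nat.strong_induction_on with
  | _ n ih =>
    refine (hrec n).trans ?_
    rw [show (3/2 * (3/2 * ∑ k ∈ Finset.range n, (5/2:ℝ)^k * C (n-1-k) / ρ^(k+1))) = 3/2 * E n
      from rfl]
    gcongr 3/2 * C n + 3/2 * ?_
    rw [← Frec n]
    apply Finset.sum_le_sum
    intro k hk
    have := ih k (Finset.mem_range.mp hk)
    gcongr

lemma continuous_Wfun (q : ℂ) (h : ℕ → ℂ → ℂ) (hh : ∀ n, Differentiable ℂ (h n)) (n : ℕ) :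
    Continuous (Wfun q h n) := by
  unfold Wfun
  exact (((hh n).continuous.mul (continuous_pow n)).mul continuous_const).add
    (continuous_finset_sum _ fun k _ =>
      (continuous_const.mul (continuous_pow k)).mul continuous_const)

lemma key_rec (q : ℂ) (h : ℕ → ℂ → ℂ) (hh : ∀ n, Differentiable ℂ (h n)) {ρ : ℝ}
    (hρ : 0 < ρ) (n : ℕ) :
    supNorm ρ (h n) * ρ ^ n * ‖q‖ ^ (n * (n + 1) / 2) ≤
      3/2 * supNorm ρ (Wfun q h n) +
      3/2 * ∑ k ∈ Finset.range n,
        (supNorm ρ (h k) * ρ ^ k * ‖q‖ ^ (k * (k + 1) / 2)) / ρ ^ (n - k) := by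
  set g : ℂ → ℂ := fun z => h n z + h n 0 with hg
  have hgd : Differentiable ℂ g := (hh n).add_const _
  have step1 : supNorm ρ (h n) ≤ 3/2 * supNorm ρ g := supNorm_add_const (hh n).continuous hρ.le
  have step2 : supNorm ρ g * ρ ^ n * ‖q ^ (n * (n + 1) / 2)‖
      ≤ supNorm ρ (fun z => g z * z ^ n * q ^ (n * (n + 1) / 2)) :=
    supNorm_mul_pow_le hgd _ n hρ
  have step3 : supNorm ρ (fun z => g z * z ^ n * q ^ (n * (n + 1) / 2))
      ≤ supNorm ρ (Wfun q h n) + ∑ k ∈ Finset.range n,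
        ‖iteratedDeriv (n - k) (h k) 0 / (Nat.factorial (n - k))‖
          * ρ ^ k * ‖q‖ ^ (k * (k + 1) / 2) := by
    apply supNorm_le hρ.le
    intro z hz
    have hid : g z * z ^ n * q ^ (n * (n + 1) / 2)
        = Wfun q h n z - ∑ k ∈ Finset.range n,
            (iteratedDeriv (n - k) (h k) 0 / (Nat.factorial (n - k))) * z ^ k
              * q ^ (k * (k + 1) / 2) := by
      rw [hg]
      unfold Wfun
      rw [Finset.sum_range_succ]
      simp only [Nat.sub_self, iteratedDeriv_zero, Nat.factorial_zero, Nat.cast_one, div_one]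
      ring
    rw [hid]
    have habs_z : ‖z‖ ≤ ρ := by
      simpa [Metric.mem_closedBall, Complex.dist_eq] using hz
    calc ‖Wfun q h n z - ∑ k ∈ Finset.range n,
            (iteratedDeriv (n - k) (h k) 0 / (Nat.factorial (n - k))) * z ^ k
              * q ^ (k * (k + 1) / 2)‖
        ≤ ‖Wfun q h n z‖ + ‖∑ k ∈ Finset.range n,
            (iteratedDeriv (n - k) (h k) 0 / (Nat.factorial (n - k))) * z ^ k
              * q ^ (k * (k + 1) / 2)‖ := norm_sub_le _ _
      _ ≤ supNorm ρ (Wfun q h n) + ∑ k ∈ Finset.range n,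
            ‖iteratedDeriv (n - k) (h k) 0 / (Nat.factorial (n - k))‖
              * ρ ^ k * ‖q‖ ^ (k * (k + 1) / 2) := by
          gcongr
          · exact abs_le_supNorm (continuous_Wfun q h hh n) hz
          · refine (norm_sum_le _ _).trans (Finset.sum_le_sum fun k hk => ?_)
            rw [norm_mul, norm_mul, norm_pow, norm_pow]
            gcongr
  -- assemble
  have cauchy : ∀ k ∈ Finset.range n,
      ‖iteratedDeriv (n - k) (h k) 0 / (Nat.factorial (n - k))‖
        * ρ ^ k * ‖q‖ ^ (k * (k + 1) / 2)
      ≤ (supNorm ρ (h k) * ρ ^ k * ‖q‖ ^ (k * (k + 1) / 2)) / ρ ^ (n - k) := by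
    intro k hk
    have h1 : ‖iteratedDeriv (n - k) (h k) 0 / (Nat.factorial (n - k))‖
        ≤ supNorm ρ (h k) / ρ ^ (n - k) := by
      rw [norm_div]
      have h2 := cauchy_est (hh k) hρ (n - k)
      have h3 : ‖(Nat.factorial (n - k) : ℂ)‖ = (Nat.factorial (n - k) : ℝ) := by
        rw [Complex.norm_natCast]
      rw [h3]
      rw [div_le_div_iff₀ (by positivity) (by positivity)]
      calc ‖iteratedDeriv (n - k) (h k) 0‖ * ρ ^ (n - k)
          ≤ ((n-k).factorial * supNorm ρ (h k) / ρ ^ (n - k)) * ρ ^ (n - k) := by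
            gcongr
        _ = supNorm ρ (h k) * (n - k).factorial := by
            field_simp
    calc ‖iteratedDeriv (n - k) (h k) 0 / (Nat.factorial (n - k))‖
          * ρ ^ k * ‖q‖ ^ (k * (k + 1) / 2)
        ≤ (supNorm ρ (h k) / ρ ^ (n - k)) * ρ ^ k * ‖q‖ ^ (k * (k + 1) / 2) := by
          gcongr
      _ = (supNorm ρ (h k) * ρ ^ k * ‖q‖ ^ (k * (k + 1) / 2)) / ρ ^ (n - k) := by
          ring
  have habs_pow : ‖q ^ (n * (n + 1) / 2)‖ = ‖q‖ ^ (n * (n + 1) / 2) :=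
    norm_pow _ _
  calc supNorm ρ (h n) * ρ ^ n * ‖q‖ ^ (n * (n + 1) / 2)
      ≤ (3/2 * supNorm ρ g) * ρ ^ n * ‖q‖ ^ (n * (n + 1) / 2) := by
        gcongr
    _ = 3/2 * (supNorm ρ g * ρ ^ n * ‖q ^ (n * (n + 1) / 2)‖) := by
        rw [habs_pow]; ring
    _ ≤ 3/2 * (supNorm ρ (Wfun q h n) + ∑ k ∈ Finset.range n,
          ‖iteratedDeriv (n - k) (h k) 0 / (Nat.factorial (n - k))‖
            * ρ ^ k * ‖q‖ ^ (k * (k + 1) / 2)) := by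
        gcongr
        exact step2.trans step3
    _ ≤ 3/2 * (supNorm ρ (Wfun q h n) + ∑ k ∈ Finset.range n,
          (supNorm ρ (h k) * ρ ^ k * ‖q‖ ^ (k * (k + 1) / 2)) / ρ ^ (n - k)) := by
        gcongr with k hk
        exact cauchy k hk
    _ = 3/2 * supNorm ρ (Wfun q h n) + 3/2 * ∑ k ∈ Finset.range n,
          (supNorm ρ (h k) * ρ ^ k * ‖q‖ ^ (k * (k + 1) / 2)) / ρ ^ (n - k) := by
        ring

/-- Lemma 2.6: the coefficient estimate
`‖h_n‖_ρ ρ^n |q|^{n(n+1)/2} ≤ (3/2)‖W_n‖_ρ + (3/2)² ∑_{k=0}^{n-1} (5/2)^k ‖W_{n-1-k}‖_ρ / ρ^{k+1}`. -/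
theorem stmt_8 (q : ℂ) (hq0 : 0 < ‖q‖) (hq1 : ‖q‖ < 1)
    (h : ℕ → ℂ → ℂ) (hh : ∀ n, Differentiable ℂ (h n)) (ρ : ℝ) (hρ : 0 < ρ) (n : ℕ) :
    supNorm ρ (h n) * ρ ^ n * ‖q‖ ^ (n * (n + 1) / 2) ≤
      (3 / 2) * supNorm ρ (Wfun q h n) +
        (3 / 2) ^ 2 * ∑ k ∈ Finset.range n,
          (5 / 2 : ℝ) ^ k * supNorm ρ (Wfun q h (n - 1 - k)) / ρ ^ (k + 1) := by
  have key := gronwall hρ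
    (fun m => supNorm ρ (h m) * ρ ^ m * ‖q‖ ^ (m * (m + 1) / 2))
    (fun m => supNorm ρ (Wfun q h m))
    (fun m => key_rec q h hh hρ m) n
  refine key.trans (le_of_eq ?_)
  ring
end

section
/- In a Banach algebra, if X·Y = q·(Y·X) with |q| < 1 and u = Y·X, then ‖u^n‖ ≤ |q|^(n(n−1)/2) · ‖Y‖^n · ‖X‖^n for all n ≥ 1; consequently ‖u^n‖^(1/n) = O(|q|^(n/2)). -/
lemma aux_comm {A : Type*} [NormedRing A] [NormedAlgebra ℂ A]
    (q : ℂ) (X Y : A) (h : X * Y = q • (Y * X)) (k : ℕ) :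
    X ^ k * Y = q ^ k • (Y * X ^ k) := by
  induction k with
  | zero => simp
  | succ k ih =>
    calc X ^ (k + 1) * Y = X ^ k * (X * Y) := by rw [pow_succ, mul_assoc]
    _ = q • (X ^ k * (Y * X)) := by rw [h, mul_smul_comm]
    _ = q • ((X ^ k * Y) * X) := by rw [mul_assoc]
    _ = q • ((q ^ k • (Y * X ^ k)) * X) := by rw [ih]
    _ = q ^ (k + 1) • (Y * X ^ (k + 1)) := by
        rw [smul_mul_assoc, smul_smul, ← pow_succ', mul_assoc, ← pow_succ]

lemma aux_pow {A : Type*} [NormedRing A] [NormedAlgebra ℂ A]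
    (q : ℂ) (X Y : A) (h : X * Y = q • (Y * X)) (n : ℕ) :
    (Y * X) ^ n = q ^ (n.choose 2) • (Y ^ n * X ^ n) := by
  induction n with
  | zero => simp
  | succ n ih =>
    have hc : (n + 1).choose 2 = n.choose 2 + n := by
      rw [Nat.choose_succ_succ]; simp [Nat.choose_one_right, Nat.add_comm]
    calc (Y * X) ^ (n + 1) = (Y * X) ^ n * (Y * X) := pow_succ _ _
    _ = q ^ (n.choose 2) • ((Y ^ n * X ^ n) * (Y * X)) := by rw [ih, smul_mul_assoc]
    _ = q ^ (n.choose 2) • (Y ^ n * ((X ^ n * Y) * X)) := by rw [mul_assoc, ← mul_assoc (X ^ n)]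
    _ = q ^ (n.choose 2) • (Y ^ n * ((q ^ n • (Y * X ^ n)) * X)) := by rw [aux_comm q X Y h n]
    _ = q ^ ((n + 1).choose 2) • (Y ^ (n + 1) * X ^ (n + 1)) := by
        rw [hc, smul_mul_assoc, mul_smul_comm, smul_smul, ← pow_add]
        congr 1
        rw [pow_succ, pow_succ]
        noncomm_ring

/-- In a Banach algebra, if `X * Y = q • (Y * X)` with `|q| < 1` and `u = Y * X`, then
`‖u ^ n‖ ≤ |q| ^ (n (n - 1) / 2) * ‖Y‖ ^ n * ‖X‖ ^ n` for all `n ≥ 1`. -/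
theorem stmt_12 {A : Type*} [NormedRing A] [NormedAlgebra ℂ A]
    (q : ℂ) (hq : ‖q‖ < 1) (X Y : A) (h : X * Y = q • (Y * X))
    (u : A) (hu : u = Y * X) (n : ℕ) (hn : 1 ≤ n) :
    ‖u ^ n‖ ≤ ‖q‖ ^ (n * (n - 1) / 2) * ‖Y‖ ^ n * ‖X‖ ^ n := by
  have key := aux_pow q X Y h n
  rw [hu, key, norm_smul, norm_pow, Nat.choose_two_right]
  have h1 : ‖Y ^ n * X ^ n‖ ≤ ‖Y‖ ^ n * ‖X‖ ^ n := by
    calc ‖Y ^ n * X ^ n‖ ≤ ‖Y ^ n‖ * ‖X ^ n‖ := norm_mul_le _ _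
    _ ≤ ‖Y‖ ^ n * ‖X‖ ^ n :=
        mul_le_mul (norm_pow_le' Y hn) (norm_pow_le' X hn) (norm_nonneg _)
          (pow_nonneg (norm_nonneg _) _)
  rw [mul_assoc]
  gcongr
end
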